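/- For every finite simple graph G, all complex roots of the Laplacian matching polynomial 𝓛𝓜(G, x) are nonnegative real numbers. -/

import Mathlib

namespace LM

open Finset

variable {V : Type*}

/-- The set of matchings of `G`, as finsets of edges that pairwise share no vertex. -/
def matchings [Fintype V] [DecidableEq V] (G : SimpleGraph V) [DecidableRel G.Adj] :
    Finset (Finset (Sym2 V)) :=
  G.edgeFinset.powerset.filter
    (fun M => ∀ e ∈ M, ∀ f ∈ M, e ≠ f → ∀ w : V, w ∈ e → w ∉ f)

/-- The set of vertices covered by a set of edges. -/
def covered [Fintype V] [DecidableEq V] (M : Finset (Sym2 V)) : Finset V :=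
  Finset.univ.filter (fun v => ∃ e ∈ M, v ∈ e)

/-- The multivariate matching polynomial `𝔐(G, x_G)`. -/
noncomputable def mvMatch [Fintype V] [DecidableEq V] (G : SimpleGraph V)
    [DecidableRel G.Adj] : MvPolynomial V ℝ :=
  ∑ M ∈ matchings G, (-1 : MvPolynomial V ℝ) ^ M.card *
    ∏ v ∈ Finset.univ \ covered M, MvPolynomial.X v

/-- The matching polynomial `𝓜(G, x)`. -/
noncomputable def matchPoly [Fintype V] [DecidableEq V] (G : SimpleGraph V)
    [DecidableRel G.Adj] : Polynomial ℝ :=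
  ∑ M ∈ matchings G, (-1 : Polynomial ℝ) ^ M.card *
    Polynomial.X ^ (Fintype.card V - 2 * M.card)

/-- The Laplacian matching polynomial `𝓛𝓜(G, x)`. -/
noncomputable def lapMatch [Fintype V] [DecidableEq V] (G : SimpleGraph V)
    [DecidableRel G.Adj] : Polynomial ℝ :=
  ∑ M ∈ matchings G, (-1 : Polynomial ℝ) ^ M.card *
    ∏ v ∈ Finset.univ \ covered M, (Polynomial.X - Polynomial.C (G.degree v : ℝ))

/-- The largest real root of a polynomial (`sSup` of its set of real roots). -/
noncomputable def lroot (p : Polynomial ℝ) : ℝ := sSup {x : ℝ | p.IsRoot x}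

instance instDecidableRelInduceAdj (G : SimpleGraph V) [DecidableRel G.Adj] (s : Set V) :
    DecidableRel (G.induce s).Adj := fun a b =>
  inferInstanceAs (Decidable (G.Adj a b))

section Aux
variable [Fintype V] [DecidableEq V] (G : SimpleGraph V) [DecidableRel G.Adj]
def mOn (S : Finset V) : Finset (Finset (Sym2 V)) :=
  (matchings G).filter (fun M => ∀ e ∈ M, ∀ w : V, w ∈ e → w ∈ S)
noncomputable def q (z : ℂ) (S : Finset V) : ℂ :=
  ∑ M ∈ mOn G S, (-1 : ℂ) ^ M.card * ∏ v ∈ S \ covered M, (z - (G.degree v : ℂ))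

lemma mem_covered {M : Finset (Sym2 V)} {w : V} : w ∈ covered M ↔ ∃ e ∈ M, w ∈ e := by
  simp [covered]

lemma mem_mOn {S : Finset V} {M : Finset (Sym2 V)} :
    M ∈ mOn G S ↔ M ⊆ G.edgeFinset ∧
      (∀ e ∈ M, ∀ f ∈ M, e ≠ f → ∀ w : V, w ∈ e → w ∉ f) ∧
      (∀ e ∈ M, ∀ w : V, w ∈ e → w ∈ S) := by
  simp [mOn, matchings, mem_filter, mem_powerset, and_assoc]


lemma empty_mem_matchings : ∅ ∈ matchings G := by
  simp [matchings]

lemma mOn_empty : mOn G (∅ : Finset V) = {∅} := by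
  ext M
  simp only [mOn, mem_filter, mem_singleton, Finset.notMem_empty]
  constructor
  · rintro ⟨hm, h⟩
    by_contra hne
    obtain ⟨e, he⟩ := Finset.nonempty_iff_ne_empty.2 hne
    obtain ⟨x, y⟩ := e
    exact h _ he x (by simp)
  · rintro rfl
    exact ⟨empty_mem_matchings G, by simp⟩

lemma q_empty (z : ℂ) : q G z ∅ = 1 := by
  simp [q, mOn_empty]

variable {G}

/-- Step 1: matchings avoiding u are matchings on S. -/
lemma filter_avoid (u : V) (S : Finset V) (hu : u ∉ S) :
    (mOn G (insert u S)).filter (fun M => ∀ e ∈ M, u ∉ e) = mOn G S := by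
  ext M
  simp only [mem_filter, mem_mOn]
  constructor
  · rintro ⟨⟨h1, h2, h3⟩, h4⟩
    refine ⟨h1, h2, fun e he w hw => ?_⟩
    rcases mem_insert.1 (h3 e he w hw) with rfl | h
    · exact absurd hw (h4 e he)
    · exact h
  · rintro ⟨h1, h2, h3⟩
    exact ⟨⟨h1, h2, fun e he w hw => mem_insert_of_mem (h3 e he w hw)⟩,
      fun e he hue => hu (h3 e he u hue)⟩

lemma not_covered_of_mOn {u : V} {S : Finset V} (hu : u ∉ S) {M : Finset (Sym2 V)}
    (hM : M ∈ mOn G S) : u ∉ covered M := by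
  rw [mem_covered]
  rintro ⟨e, he, hue⟩
  exact hu (((mem_mOn G).1 hM).2.2 e he u hue)

/-- Step 6 bijection: matchings on insert u S containing s(u,v) ↔ matchings on S.erase v. -/
lemma bij_edge {u v : V} {S : Finset V} (hu : u ∉ S) (hv : v ∈ S) (hadj : G.Adj u v)
    {M : Finset (Sym2 V)} (hM : M ∈ mOn G (insert u S)) (he : s(u, v) ∈ M) :
    M.erase s(u, v) ∈ mOn G (S.erase v) := by
  obtain ⟨h1, h2, h3⟩ := (mem_mOn G).1 hM
  refine (mem_mOn G).2 ⟨(erase_subset _ _).trans h1,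
    fun e he' f hf' => h2 e (mem_of_mem_erase he') f (mem_of_mem_erase hf'),
    fun e he' w hw => ?_⟩
  have heM : e ∈ M := mem_of_mem_erase he'
  have hne : e ≠ s(u, v) := ne_of_mem_erase he'
  have hwu : w ≠ u := by
    rintro rfl
    exact h2 e heM _ he hne w hw (by simp)
  have hwv : w ≠ v := by
    rintro rfl
    exact h2 e heM _ he hne w hw (by simp)
  rcases mem_insert.1 (h3 e heM w hw) with rfl | h
  · exact absurd rfl hwu
  · exact mem_erase.2 ⟨hwv, h⟩

lemma bij_edge_inv {u v : V} {S : Finset V} (hu : u ∉ S) (hv : v ∈ S) (hadj : G.Adj u v)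
    {M' : Finset (Sym2 V)} (hM' : M' ∈ mOn G (S.erase v)) :
    insert s(u, v) M' ∈ mOn G (insert u S) ∧ s(u, v) ∉ M' := by
  obtain ⟨h1, h2, h3⟩ := (mem_mOn G).1 hM'
  have hnotmem : s(u, v) ∉ M' := by
    intro h
    exact hu (mem_of_mem_erase (h3 _ h u (by simp)))
  have hdisj : ∀ f ∈ M', ∀ w : V, w ∈ s(u, v) → w ∉ f := by
    intro f hf w hw hwf
    have := h3 f hf w hwf
    rcases Sym2.mem_iff.1 hw with rfl | rfl
    · exact hu (mem_of_mem_erase this)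
    · exact (mem_erase.1 this).1 rfl
  refine ⟨(mem_mOn G).2 ⟨?_, ?_, ?_⟩, hnotmem⟩
  · intro e he
    rcases mem_insert.1 he with rfl | h
    · exact SimpleGraph.mem_edgeFinset.2 hadj
    · exact h1 h
  · intro e he f hf hef w hwe hwf
    rcases mem_insert.1 he with rfl | he'
    · rcases mem_insert.1 hf with rfl | hf'
      · exact hef rfl
      · exact hdisj f hf' w hwe hwf
    · rcases mem_insert.1 hf with rfl | hf'
      · exact hdisj e he' w hwf hwe
      · exact h2 e he' f hf' hef w hwe hwf
  · intro e he w hw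
    rcases mem_insert.1 he with rfl | he'
    · rcases Sym2.mem_iff.1 hw with rfl | rfl
      · exact mem_insert_self _ _
      · exact mem_insert_of_mem hv
    · exact mem_insert_of_mem (mem_of_mem_erase (h3 e he' w hw))

lemma prod_set_eq {u v : V} {S : Finset V} (hu : u ∉ S) (hv : v ∈ S)
    {M : Finset (Sym2 V)} (hM : M ∈ mOn G (insert u S)) (he : s(u, v) ∈ M) :
    insert u S \ covered M = (S.erase v) \ covered (M.erase s(u, v)) := by
  obtain ⟨h1, h2, h3⟩ := (mem_mOn G).1 hM
  ext w
  simp only [mem_sdiff, mem_insert, mem_erase, mem_covered]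
  constructor
  · rintro ⟨hw, hnc⟩
    have hwu : w ≠ u := by rintro rfl; exact hnc ⟨_, he, by simp⟩
    have hwv : w ≠ v := by rintro rfl; exact hnc ⟨_, he, by simp⟩
    refine ⟨⟨hwv, hw.resolve_left hwu⟩, fun ⟨e, he', hwe⟩ => hnc ⟨e, he'.2, hwe⟩⟩
  · rintro ⟨⟨hwv, hwS⟩, hnc⟩
    refine ⟨Or.inr hwS, fun ⟨e, he', hwe⟩ => ?_⟩
    by_cases hee : e = s(u, v)
    · subst hee
      rcases Sym2.mem_iff.1 hwe with rfl | rfl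
      · exact hu hwS
      · exact hwv rfl
    · exact hnc ⟨e, ⟨hee, he'⟩, hwe⟩
end Aux

section Rec
variable [Fintype V] [DecidableEq V] {G : SimpleGraph V} [DecidableRel G.Adj]

lemma q_rec (z : ℂ) (u : V) (S : Finset V) (hu : u ∉ S) :
    q G z (insert u S) = (z - (G.degree u : ℂ)) * q G z S
      - ∑ v ∈ S.filter (G.Adj u), q G z (S.erase v) := by
  classical
  set f : Finset (Sym2 V) → ℂ :=
    fun M => (-1 : ℂ) ^ M.card * ∏ v ∈ insert u S \ covered M, (z - (G.degree v : ℂ)) with hf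
  set N : Finset V := S.filter (G.Adj u) with hN
  set T : Finset (Finset (Sym2 V)) := mOn G (insert u S) with hT
  have hsplit : ∑ M ∈ T.filter (fun M => ∀ e ∈ M, u ∉ e), f M
      + ∑ M ∈ T.filter (fun M => ¬ ∀ e ∈ M, u ∉ e), f M = ∑ M ∈ T, f M :=
    Finset.sum_filter_add_sum_filter_not T _ f
  have part1 : ∑ M ∈ T.filter (fun M => ∀ e ∈ M, u ∉ e), f M
      = (z - (G.degree u : ℂ)) * q G z S := by
    rw [hT, filter_avoid u S hu, q, mul_sum]
    refine sum_congr rfl fun M hM => ?_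
    have hcov : u ∉ covered M := not_covered_of_mOn hu hM
    have hset : insert u S \ covered M = insert u (S \ covered M) :=
      Finset.insert_sdiff_of_notMem _ hcov
    have hu2 : u ∉ S \ covered M := fun h => hu (mem_sdiff.1 h).1
    rw [hf]
    simp only [hset, prod_insert hu2]
    ring
  have huniq : ∀ M ∈ T.filter (fun M => ¬ ∀ e ∈ M, u ∉ e),
      ∃ v₀, N.filter (fun v => s(u, v) ∈ M) = {v₀} := by
    intro M hM
    rw [mem_filter] at hM
    obtain ⟨hMT, hne⟩ := hM
    push_neg at hne
    obtain ⟨e, heM, hue⟩ := hne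
    obtain ⟨h1, h2, h3⟩ := (mem_mOn G).1 hMT
    obtain ⟨v, rfl⟩ := Sym2.mem_iff_exists.1 hue
    have hadj : G.Adj u v := by
      have := h1 heM
      rw [SimpleGraph.mem_edgeFinset, SimpleGraph.mem_edgeSet] at this
      exact this
    have hvS : v ∈ S := by
      rcases mem_insert.1 (h3 _ heM v (by simp)) with rfl | h
      · exact absurd hadj (G.irrefl)
      · exact h
    refine ⟨v, eq_singleton_iff_unique_mem.2
      ⟨mem_filter.2 ⟨mem_filter.2 ⟨hvS, hadj⟩, heM⟩, ?_⟩⟩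
    intro w hw
    rw [mem_filter, mem_filter] at hw
    obtain ⟨⟨hwS, hadjw⟩, hwM⟩ := hw
    by_contra hne'
    have hedges : s(u, w) ≠ s(u, v) := fun h => hne' (Sym2.congr_right.1 h)
    exact h2 _ hwM _ heM hedges u (by simp) (by simp)
  have part2 : ∑ M ∈ T.filter (fun M => ¬ ∀ e ∈ M, u ∉ e), f M
      = - ∑ v ∈ N, q G z (S.erase v) := by
    have step1 : ∑ M ∈ T.filter (fun M => ¬ ∀ e ∈ M, u ∉ e), f M
        = ∑ M ∈ T.filter (fun M => ¬ ∀ e ∈ M, u ∉ e),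
            ∑ v ∈ N, if s(u, v) ∈ M then f M else 0 := by
      refine sum_congr rfl fun M hM => ?_
      obtain ⟨v₀, hv₀⟩ := huniq M hM
      rw [← sum_filter, hv₀, sum_singleton]
    rw [step1, Finset.sum_comm]
    rw [← Finset.sum_neg_distrib]
    refine sum_congr rfl fun v hv => ?_
    rw [← sum_filter]
    have hvS : v ∈ S := (mem_filter.1 hv).1
    have hadj : G.Adj u v := (mem_filter.1 hv).2
    have hfilter : (T.filter (fun M => ¬ ∀ e ∈ M, u ∉ e)).filter (fun M => s(u, v) ∈ M)
        = T.filter (fun M => s(u, v) ∈ M) := by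
      rw [filter_filter]
      refine filter_congr fun M hM => ?_
      simp only [and_iff_right_iff_imp]
      intro hmem hall
      exact hall _ hmem (by simp)
    rw [hfilter]
    rw [q, ← Finset.sum_neg_distrib]
    refine Finset.sum_nbij' (fun M => M.erase s(u, v)) (fun M' => insert s(u, v) M')
      ?_ ?_ ?_ ?_ ?_
    · intro M hM
      rw [mem_filter] at hM
      exact bij_edge hu hvS hadj hM.1 hM.2
    · intro M' hM'
      refine mem_filter.2 ⟨(bij_edge_inv hu hvS hadj hM').1, mem_insert_self _ _⟩
    · intro M hM
      exact insert_erase (mem_filter.1 hM).2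
    · intro M' hM'
      exact erase_insert (bij_edge_inv hu hvS hadj hM').2
    · intro M hM
      rw [mem_filter] at hM
      obtain ⟨hMT, heM⟩ := hM
      have hcard : (M.erase s(u, v)).card + 1 = M.card := Finset.card_erase_add_one heM
      have hprod := prod_set_eq hu hvS hMT heM
      rw [hf]
      simp only [hprod, ← hcard, pow_succ]
      ring
  have : q G z (insert u S) = ∑ M ∈ T, f M := rfl
  rw [this, ← hsplit, part1, part2]
  ring
end Rec

section HL
variable [Fintype V] [DecidableEq V] {G : SimpleGraph V} [DecidableRel G.Adj]

lemma q_ne_zero_of_im_pos (z : ℂ) (hz : 0 < z.im) (S : Finset V) :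
    q G z S ≠ 0 ∧ ∀ v ∈ S, 0 < (q G z S / q G z (S.erase v)).im := by
  induction S using Finset.strongInduction with
  | _ S IH =>
  have key : ∀ v ∈ S, 0 < (q G z S / q G z (S.erase v)).im := by
    intro v hv
    have hS' := IH (S.erase v) (Finset.erase_ssubset hv)
    have hq' : q G z (S.erase v) ≠ 0 := hS'.1
    have hrec := q_rec (G:=G) z v (S.erase v) (notMem_erase _ _)
    rw [insert_erase hv] at hrec
    have hratio : q G z S / q G z (S.erase v)
        = (z - (G.degree v : ℂ)) - ∑ w ∈ (S.erase v).filter (G.Adj v),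
            q G z ((S.erase v).erase w) / q G z (S.erase v) := by
      rw [hrec, sub_div, mul_div_cancel_right₀ _ hq', sum_div]
    have him : ∀ w ∈ (S.erase v).filter (G.Adj v),
        (q G z ((S.erase v).erase w) / q G z (S.erase v)).im ≤ 0 := by
      intro w hw
      have hw' : w ∈ S.erase v := (mem_filter.1 hw).1
      have h1 : 0 < (q G z (S.erase v) / q G z ((S.erase v).erase w)).im := hS'.2 w hw'
      have h2 : q G z ((S.erase v).erase w) ≠ 0 :=
        (IH _ ((erase_ssubset hw').trans (erase_ssubset hv))).1
      have heq : q G z ((S.erase v).erase w) / q G z (S.erase v)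
          = (q G z (S.erase v) / q G z ((S.erase v).erase w))⁻¹ := by
        rw [inv_div]
      rw [heq, Complex.inv_im]
      apply div_nonpos_of_nonpos_of_nonneg
      · linarith
      · exact Complex.normSq_nonneg _
    rw [hratio, Complex.sub_im, Complex.sub_im, Complex.natCast_im, Complex.im_sum]
    have hsum : ∑ w ∈ (S.erase v).filter (G.Adj v),
        (q G z ((S.erase v).erase w) / q G z (S.erase v)).im ≤ 0 :=
      Finset.sum_nonpos him
    linarith
  have hne : q G z S ≠ 0 := by
    rcases S.eq_empty_or_nonempty with rfl | ⟨v, hv⟩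
    · rw [q_empty]; exact one_ne_zero
    · intro h0
      have hk := key v hv
      rw [h0, zero_div] at hk
      simp at hk
  exact ⟨hne, key⟩
end HL

section Real
variable [Fintype V] [DecidableEq V] (G : SimpleGraph V) [DecidableRel G.Adj]

noncomputable def qR (x : ℝ) (S : Finset V) : ℝ :=
  ∑ M ∈ mOn G S, (-1 : ℝ) ^ M.card * ∏ v ∈ S \ covered M, (x - (G.degree v : ℝ))

lemma qR_cast (x : ℝ) (S : Finset V) : ((qR G x S : ℝ) : ℂ) = q G (x : ℂ) S := by
  rw [qR, q]
  push_cast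
  rfl

variable {G}

lemma qR_empty (x : ℝ) : qR G x ∅ = 1 := by
  simp [qR, mOn_empty]

lemma qR_rec (x : ℝ) (u : V) (S : Finset V) (hu : u ∉ S) :
    qR G x (insert u S) = (x - (G.degree u : ℝ)) * qR G x S
      - ∑ v ∈ S.filter (G.Adj u), qR G x (S.erase v) := by
  have h := q_rec (G:=G) (x : ℂ) u S hu
  simp only [← qR_cast] at h
  exact_mod_cast h

lemma qR_neg (x : ℝ) (hx : x < 0) (S : Finset V) :
    0 < (-1 : ℝ) ^ S.card * qR G x S ∧ ∀ v ∈ S,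
      qR G x S / qR G x (S.erase v) ≤ x - (G.degree v : ℝ)
        + (((S.erase v).filter (G.Adj v)).card : ℝ) / (1 - x) := by
  induction S using Finset.strongInduction with
  | _ S IH =>
  have h1x : (1 : ℝ) < 1 - x := by linarith
  have h0x : (0 : ℝ) < 1 - x := by linarith
  have key : ∀ v ∈ S, qR G x S / qR G x (S.erase v) ≤ x - (G.degree v : ℝ)
      + (((S.erase v).filter (G.Adj v)).card : ℝ) / (1 - x) := by
    intro v hv
    have hS' := IH (S.erase v) (Finset.erase_ssubset hv)
    have hq'pos := hS'.1
    have hq' : qR G x (S.erase v) ≠ 0 := by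
      intro h0
      rw [h0, mul_zero] at hq'pos
      exact lt_irrefl _ hq'pos
    have hrec := qR_rec (G:=G) x v (S.erase v) (notMem_erase _ _)
    rw [insert_erase hv] at hrec
    have hratio : qR G x S / qR G x (S.erase v)
        = (x - (G.degree v : ℝ)) - ∑ w ∈ (S.erase v).filter (G.Adj v),
            qR G x ((S.erase v).erase w) / qR G x (S.erase v) := by
      rw [hrec, sub_div, mul_div_cancel_right₀ _ hq', sum_div]
    have hterm : ∀ w ∈ (S.erase v).filter (G.Adj v),
        - (qR G x ((S.erase v).erase w) / qR G x (S.erase v)) ≤ 1 / (1 - x) := by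
      intro w hw
      have hw' : w ∈ S.erase v := (mem_filter.1 hw).1
      have hadjvw : G.Adj v w := (mem_filter.1 hw).2
      have hρ := hS'.2 w hw'
      have hdw1 : 1 ≤ G.degree w := by
        rw [← SimpleGraph.card_neighborFinset_eq_degree]
        exact card_pos.2 ⟨v, by simp [hadjvw.symm]⟩
      have hdw1' : (1 : ℝ) ≤ (G.degree w : ℝ) := by exact_mod_cast hdw1
      have hew : ((((S.erase v).erase w).filter (G.Adj w)).card : ℝ)
          ≤ (G.degree w : ℝ) - 1 := by
        have hsub : (((S.erase v).erase w).filter (G.Adj w))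
            ⊆ (G.neighborFinset w).erase v := by
          intro y hy
          rw [mem_filter] at hy
          refine mem_erase.2 ⟨?_, by simpa using hy.2⟩
          intro hyv
          subst hyv
          exact (notMem_erase y S) (mem_of_mem_erase hy.1)
        have hcard := card_le_card hsub
        have hv' : v ∈ G.neighborFinset w := by simp [hadjvw.symm]
        rw [card_erase_of_mem hv', SimpleGraph.card_neighborFinset_eq_degree] at hcard
        have h2 := (Nat.cast_le (α := ℝ)).2 hcard
        rwa [Nat.cast_sub hdw1, Nat.cast_one] at h2
      have hρ2 : qR G x (S.erase v) / qR G x ((S.erase v).erase w) ≤ -(1 - x) := by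
        have hA : ((((S.erase v).erase w).filter (G.Adj w)).card : ℝ) / (1 - x)
            ≤ ((G.degree w : ℝ) - 1) / (1 - x) := by gcongr
        have hB : ((G.degree w : ℝ) - 1) / (1 - x) ≤ (G.degree w : ℝ) - 1 :=
          div_le_self (by linarith) (le_of_lt h1x)
        linarith
      have hEq : qR G x ((S.erase v).erase w) / qR G x (S.erase v)
          = (qR G x (S.erase v) / qR G x ((S.erase v).erase w))⁻¹ := by
        rw [inv_div]
      rw [hEq, ← inv_neg]
      calc (-(qR G x (S.erase v) / qR G x ((S.erase v).erase w)))⁻¹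
          ≤ (1 - x)⁻¹ := by
            apply inv_anti₀ h0x
            linarith
        _ = 1 / (1 - x) := (one_div _).symm
    rw [hratio]
    have hsum : ∑ w ∈ (S.erase v).filter (G.Adj v),
        - (qR G x ((S.erase v).erase w) / qR G x (S.erase v))
        ≤ ∑ _w ∈ (S.erase v).filter (G.Adj v), 1 / (1 - x) :=
      Finset.sum_le_sum hterm
    rw [Finset.sum_neg_distrib, Finset.sum_const, nsmul_eq_mul, mul_one_div] at hsum
    linarith
  have hpos : 0 < (-1 : ℝ) ^ S.card * qR G x S := by
    rcases S.eq_empty_or_nonempty with rfl | ⟨v, hv⟩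
    · simp [qR_empty]
    · have hS' := IH (S.erase v) (Finset.erase_ssubset hv)
      have hq'pos := hS'.1
      have hq' : qR G x (S.erase v) ≠ 0 := by
        intro h0
        rw [h0, mul_zero] at hq'pos
        exact lt_irrefl _ hq'pos
      have hk := key v hv
      have hdv : (((S.erase v).filter (G.Adj v)).card : ℝ) ≤ (G.degree v : ℝ) := by
        have hsub : (S.erase v).filter (G.Adj v) ⊆ G.neighborFinset v := by
          intro y hy
          simp [(mem_filter.1 hy).2]
        have := card_le_card hsub
        rw [SimpleGraph.card_neighborFinset_eq_degree] at this
        exact_mod_cast this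
      have hα : (((S.erase v).filter (G.Adj v)).card : ℝ) / (1 - x)
          ≤ (((S.erase v).filter (G.Adj v)).card : ℝ) :=
        div_le_self (by positivity) (le_of_lt h1x)
      have hρneg : qR G x S / qR G x (S.erase v) < 0 := by linarith
      have hqS : qR G x S = (qR G x S / qR G x (S.erase v)) * qR G x (S.erase v) :=
        (div_mul_cancel₀ _ hq').symm
      rw [hqS, ← card_erase_add_one hv, pow_succ]
      have hring : (-1 : ℝ) ^ (S.erase v).card * -1
            * ((qR G x S / qR G x (S.erase v)) * qR G x (S.erase v))
          = (-(qR G x S / qR G x (S.erase v)))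
            * ((-1 : ℝ) ^ (S.erase v).card * qR G x (S.erase v)) := by ring
      rw [hring]
      exact mul_pos (by linarith) hq'pos
  exact ⟨hpos, key⟩

end Real


section Final2
variable [Fintype V] [DecidableEq V] (G : SimpleGraph V) [DecidableRel G.Adj]

lemma mOn_univ : mOn G Finset.univ = matchings G := by
  rw [mOn]
  exact filter_true_of_mem fun M _ => fun e _ w _ => mem_univ w

lemma eval_lapMatch (z : ℂ) :
    ((lapMatch G).map (algebraMap ℝ ℂ)).eval z = q G z Finset.univ := by
  rw [lapMatch, q, mOn_univ, Polynomial.map_sum, Polynomial.eval_finset_sum]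
  refine sum_congr rfl fun M _ => ?_
  simp [Polynomial.eval_prod]

lemma q_conj (z : ℂ) (S : Finset V) :
    q G ((starRingEnd ℂ) z) S = (starRingEnd ℂ) (q G z S) := by
  rw [q, q, map_sum]
  refine sum_congr rfl fun M _ => ?_
  rw [map_mul, map_pow, map_prod]
  simp

end Final2

/-- All complex roots of the Laplacian matching polynomial `𝓛𝓜(G, x)`
are nonnegative real numbers. -/
theorem lapMatch_roots_nonneg_real [Fintype V] [DecidableEq V] (G : SimpleGraph V)
    [DecidableRel G.Adj] (z : ℂ) (hz : ((lapMatch G).map (algebraMap ℝ ℂ)).IsRoot z) :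
    ∃ r : ℝ, 0 ≤ r ∧ z = (r : ℂ) := by
  have h0 : q G z Finset.univ = 0 := by
    have h := hz
    rwa [Polynomial.IsRoot, eval_lapMatch] at h
  rcases lt_trichotomy z.im 0 with him | him | him
  · exfalso
    have hconj : q G ((starRingEnd ℂ) z) Finset.univ = 0 := by
      rw [q_conj, h0, map_zero]
    have hpos : 0 < ((starRingEnd ℂ) z).im := by
      rw [Complex.conj_im]; linarith
    exact (q_ne_zero_of_im_pos _ hpos Finset.univ).1 hconj
  · have hzre : z = ((z.re : ℝ) : ℂ) := by
      apply Complex.ext <;> simp [him]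
    rcases lt_or_ge z.re 0 with hneg | hpos
    · exfalso
      have hq := (qR_neg (G:=G) z.re hneg Finset.univ).1
      have hc : ((qR G z.re Finset.univ : ℝ) : ℂ) = 0 := by
        rw [qR_cast, ← hzre, h0]
      have h2 : qR G z.re Finset.univ = 0 := by exact_mod_cast hc
      rw [h2, mul_zero] at hq
      exact lt_irrefl _ hq
    · exact ⟨z.re, hpos, hzre⟩
  · exact absurd h0 (q_ne_zero_of_im_pos z him Finset.univ).1


end LM
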